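/- Let α be a type of atoms, let P be a ground program over α, and let F ⊆ F' ⊆ α be two sets of atoms (facts); let F̂ denote the set of fact rules {a. : a ∈ F}. Let Inst^∞(P,F') denote the least fixpoint of the monotone operator R ↦ Inst(P, Heads(R) ∪ F') on subsets of P, where Inst(P, S) = {r ∈ P : B⁺(r) ⊆ S}. Then Inst^∞(P,F') ∪ F̂ is an embedding program for P ∪ F̂. -/
import Mathlib


structure GroundRule (α : Type*) where
  head : Set α
  posBody : Set α
  negBody : Set α

namespace GroundRule

variable {α : Type*}

/-- `Heads R` is the set of all head atoms of rules in `R`. -/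
def Heads (R : Set (GroundRule α)) : Set α := ⋃ r ∈ R, r.head

/-- `R` body-embeds `r` (written `R ⊢_b r`). -/
def BodyEmbeds (R : Set (GroundRule α)) (r : GroundRule α) : Prop :=
  ∀ a ∈ r.posBody, ∃ r' ∈ R, a ∈ r'.head

/-- `R` embeds `r` (written `R ⊢ r`): either `R` does not body-embed `r`,
or `R` head-embeds `r` (i.e. `r ∈ R`). -/
def Embeds (R : Set (GroundRule α)) (r : GroundRule α) : Prop :=
  ¬ BodyEmbeds R r ∨ r ∈ R

/-- `E` is an embedding program for the ground program `G`. -/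
def IsEmbeddingProgram (G E : Set (GroundRule α)) : Prop :=
  E ⊆ G ∧ ∀ r ∈ G, Embeds E r

/-- The fact rule `a.` for an atom `a`. -/
def factRule (a : α) : GroundRule α := ⟨{a}, ∅, ∅⟩

/-- `factRules F` is the set of fact rules `{a. : a ∈ F}`. -/
def factRules (F : Set α) : Set (GroundRule α) := factRule '' F

/-- The instantiation operator `Inst(P, S) = {r ∈ P : B⁺(r) ⊆ S}`. -/
def Inst (P : Set (GroundRule α)) (S : Set α) : Set (GroundRule α) :=
  {r ∈ P | r.posBody ⊆ S}

/-- Interpretation `I` satisfies the body of `r`. -/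
def SatBody (I : Set α) (r : GroundRule α) : Prop :=
  r.posBody ⊆ I ∧ r.negBody ∩ I = ∅

/-- Interpretation `I` satisfies the rule `r`. -/
def SatRule (I : Set α) (r : GroundRule α) : Prop :=
  ¬ SatBody I r ∨ (r.head ∩ I).Nonempty

/-- `I` is a model of the ground program `G`. -/
def IsModel (I : Set α) (G : Set (GroundRule α)) : Prop :=
  ∀ r ∈ G, SatRule I r

/-- FLP reduct `G^I = {r ∈ G : I ⊨ B(r)}`. -/
def reduct (G : Set (GroundRule α)) (I : Set α) : Set (GroundRule α) :=
  {r ∈ G | SatBody I r}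

/-- `A` is an answer set of `G`: `A` is a model of `G^A` minimal w.r.t. `⊆`. -/
def IsAnswerSet (G : Set (GroundRule α)) (A : Set α) : Prop :=
  IsModel A (reduct G A) ∧ ∀ B, B ⊂ A → ¬ IsModel B (reduct G A)

/-- `AS G` is the set of all answer sets of `G`. -/
def AS (G : Set (GroundRule α)) : Set (Set α) := {A | IsAnswerSet G A}

theorem Heads_mono {R R' : Set (GroundRule α)} (h : R ⊆ R') : Heads R ⊆ Heads R' := by
  intro a ha
  simp only [Heads, Set.mem_iUnion, exists_prop] at ha ⊢
  obtain ⟨r, hr, har⟩ := ha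
  exact ⟨r, h hr, har⟩

/-- The monotone operator `R ↦ Inst(P, Heads(R) ∪ F)`. -/
def InstOp (P : Set (GroundRule α)) (F : Set α) :
    Set (GroundRule α) →o Set (GroundRule α) where
  toFun R := Inst P (Heads R ∪ F)
  monotone' := fun _ _ h _ hr =>
    ⟨hr.1, hr.2.trans (Set.union_subset_union_left F (Heads_mono h))⟩

/-- `Inst^∞(P, F)`: the least fixpoint of `R ↦ Inst(P, Heads(R) ∪ F)`. -/
def InstInf (P : Set (GroundRule α)) (F : Set α) : Set (GroundRule α) :=
  OrderHom.lfp (InstOp P F)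

end GroundRule

open GroundRule

/-- for `F ⊆ F'`, the set `Inst^∞(P,F') ∪ F̂` is an embedding
program for `P ∪ F̂`. -/
theorem instInf_union_facts_isEmbedding {α : Type*} (P : Set (GroundRule α))
    (F F' : Set α) (h : F ⊆ F') :
    IsEmbeddingProgram (P ∪ factRules F) (InstInf P F' ∪ factRules F) := by
  have hfix : InstOp P F' (InstInf P F') = InstInf P F' :=
    OrderHom.map_lfp (InstOp P F')
  have hsub : InstInf P F' ⊆ P := by
    rw [← hfix]; exact fun r hr => hr.1
  constructor
  · exact Set.union_subset_union_left _ hsub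
  · intro r hr
    rcases hr with hr | hr
    · by_cases hb : BodyEmbeds (InstInf P F' ∪ factRules F) r
      · right
        left
        rw [← hfix]
        refine ⟨hr, fun a ha => ?_⟩
        obtain ⟨r', hr', har'⟩ := hb a ha
        rcases hr' with hr' | hr'
        · left
          simp only [Heads, Set.mem_iUnion, exists_prop]
          exact ⟨r', hr', har'⟩
        · obtain ⟨b, hb', rfl⟩ := hr'
          simp only [factRule] at har'
          rcases har' with rfl
          exact Or.inr (h hb')
      · exact Or.inl hb
    · exact Or.inr (Or.inr hr)
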